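/- (Lemma 2: three mutually unbiased bases in every dimension.) Let d ∈ ℕ with d ≥ 2, let f : {0,…,d−1} → ℝ be any function, let r ∈ ℕ ∪ {0}, and let p be an odd prime with gcd(d, p) = 1 and d > p^r. Define vectors in ℂ^d by e¹_a = the a-th standard basis vector, e²_a = (1/√d) Σ_{j=0}^{d-1} exp(2πi(aj/d + f(j))) e_j, and e³_a = (1/√d) Σ_{j=0}^{d-1} exp(2πi((d − p^r) j²/(2d) + aj/d + f(j))) e_j, for a = 0,…,d−1. Then {e¹_a}, {e²_a}, {e³_a} are each orthonormal bases of ℂ^d, and they are pairwise mutually unbiased: |⟨e^z_a, e^{z'}_b⟩|² = 1/d for all z ≠ z' in {1,2,3} and all a, b ∈ {0,…,d−1}. -/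

import Mathlib

open Matrix BigOperators Complex Finset

lemma sumA (d : ℕ) (hd : 0 < d) (n : ℤ) :
    ∑ j : Fin d, Complex.exp (2 * Real.pi * Complex.I * n * j / d) =
      if (d : ℤ) ∣ n then (d : ℂ) else 0 := by
  have hdC : (d : ℂ) ≠ 0 := Nat.cast_ne_zero.mpr hd.ne'
  set ζ : ℂ := Complex.exp (2 * Real.pi * Complex.I * n / d) with hζ
  have hterm : ∀ j : Fin d, Complex.exp (2 * Real.pi * Complex.I * n * j / d) = ζ ^ (j : ℕ) := by
    intro j
    rw [hζ, ← Complex.exp_nat_mul]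
    ring_nf
  have hζ1 : ζ = 1 ↔ (d : ℤ) ∣ n := by
    rw [hζ, Complex.exp_eq_one_iff]
    constructor
    · rintro ⟨m, hm⟩
      refine ⟨m, ?_⟩
      have h2 : (2 : ℂ) * Real.pi * Complex.I ≠ 0 := by
        simp [Real.pi_ne_zero, Complex.I_ne_zero]
      field_simp at hm
      have h4 : (n : ℂ) = (d : ℂ) * m := by linear_combination hm
      exact_mod_cast h4
    · rintro ⟨m, hm⟩
      refine ⟨m, ?_⟩
      rw [hm]
      push_cast
      field_simp
  simp_rw [hterm]
  rw [Fin.sum_univ_eq_sum_range]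
  by_cases h : (d : ℤ) ∣ n
  · rw [if_pos h, hζ1.mpr h]
    simp
  · rw [if_neg h]
    have hz : ζ ≠ 1 := fun hh => h (hζ1.mp hh)
    rw [geom_sum_eq hz]
    have hpow : ζ ^ d = 1 := by
      rw [hζ, ← Complex.exp_nat_mul]
      have : (d : ℂ) * (2 * Real.pi * Complex.I * n / d) = n * (2 * Real.pi * Complex.I) := by
        field_simp
      rw [this, Complex.exp_int_mul_two_pi_mul_I]
    rw [hpow]
    simp

lemma shiftSum (d : ℕ) (hd : 0 < d) (g : ℤ → ℂ)
    (hper : ∀ j j' : ℤ, ((j : ZMod d) = (j' : ZMod d)) → g j = g j') (k : ℤ) :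
    ∑ j : Fin d, g (k + (j : ℕ)) = ∑ j : Fin d, g (j : ℕ) := by
  haveI : NeZero d := ⟨hd.ne'⟩
  have hb : Function.Bijective (fun j : Fin d => ((j : ℕ) : ZMod d)) := by
    rw [Fintype.bijective_iff_injective_and_card]
    refine ⟨?_, by simp [ZMod.card]⟩
    intro x y hxy
    have hx := ZMod.val_cast_of_lt (n := d) x.isLt
    have hy := ZMod.val_cast_of_lt (n := d) y.isLt
    have h2 : ((x : ℕ) : ZMod d).val = ((y : ℕ) : ZMod d).val := by
      simpa using congrArg ZMod.val hxy
    exact Fin.ext (by omega)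
  have key : ∀ m : ℤ, ∑ j : Fin d, g (m + (j : ℕ)) = ∑ x : ZMod d, g ((m : ZMod d) + x).val := by
    intro m
    apply Fintype.sum_bijective _ hb
    intro j
    apply hper
    push_cast [ZMod.natCast_val, ZMod.intCast_cast, ZMod.cast_id]
    ring
  have h0 : ∑ j : Fin d, g ((j : ℕ)) = ∑ x : ZMod d, g (x.val) := by
    simpa using key 0
  rw [key k, h0]
  exact Fintype.sum_equiv (Equiv.addLeft ((k : ZMod d))) _ _ (fun x => rfl)

lemma gaussB (d : ℕ) (hd : 0 < d) (A B c : ℤ) (hcop : IsCoprime A (d:ℤ)) (hc : A * d = 2 * c) :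
    (∑ j : Fin d, Complex.exp (Real.pi * Complex.I * ((A:ℂ) * ((j:ℕ):ℂ)^2 + 2*(B:ℂ)*((j:ℕ):ℂ)) / d)) *
      (starRingEnd ℂ) (∑ j : Fin d,
        Complex.exp (Real.pi * Complex.I * ((A:ℂ) * ((j:ℕ):ℂ)^2 + 2*(B:ℂ)*((j:ℕ):ℂ)) / d)) = d := by
  have hdC : (d : ℂ) ≠ 0 := Nat.cast_ne_zero.mpr hd.ne'
  haveI : NeZero d := ⟨hd.ne'⟩
  set g : ℤ → ℂ := fun j =>
    Complex.exp (Real.pi * Complex.I * ((A:ℂ) * (j:ℂ)^2 + 2*(B:ℂ)*(j:ℂ)) / d) with hg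
  have hS : ∀ s : Finset (Fin d), ∑ j ∈ s,
      Complex.exp (Real.pi * Complex.I * ((A:ℂ) * ((j:ℕ):ℂ)^2 + 2*(B:ℂ)*((j:ℕ):ℂ)) / d)
      = ∑ j ∈ s, g ((j:ℕ) : ℤ) := by
    intro s; apply Finset.sum_congr rfl; intro j _; rw [hg]; push_cast; ring_nf
  have hcC : (A:ℂ) * d = 2 * c := by exact_mod_cast congrArg (Int.cast : ℤ → ℂ) hc
  have hper : ∀ j j' : ℤ, ((j : ZMod d) = (j' : ZMod d)) → g j = g j' := by
    intro j j' h
    have hdvd : (d:ℤ) ∣ j - j' := by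
      have := (ZMod.intCast_eq_intCast_iff _ _ _).mp h
      exact (Int.ModEq.dvd this.symm)
    obtain ⟨m, hm⟩ := hdvd
    have hj : j = j' + d * m := by omega
    subst hj
    rw [hg]
    show Complex.exp _ = Complex.exp _
    rw [← mul_one (Complex.exp (Real.pi * Complex.I * ((A:ℂ) * ((j':ℤ):ℂ)^2 + 2*(B:ℂ)*((j':ℤ):ℂ)) / d)),
      ← Complex.exp_int_mul_two_pi_mul_I (A*j'*m + c*m^2 + B*m), ← Complex.exp_add]
    congr 1
    push_cast
    field_simp
    linear_combination ((m:ℂ)^2 * (d:ℂ)) * hcC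
  have hconj : ∀ k : ℤ, (starRingEnd ℂ) (g k) =
      Complex.exp (-(Real.pi * Complex.I * ((A:ℂ) * (k:ℂ)^2 + 2*(B:ℂ)*(k:ℂ)) / d)) := by
    intro k
    rw [hg]
    show (starRingEnd ℂ) (Complex.exp _) = _
    rw [← Complex.exp_conj]
    congr 1
    simp [map_div₀, Complex.conj_ofReal, map_ofNat]
    ring
  rw [hS, map_sum, Finset.mul_sum]
  have step1 : ∀ k : Fin d, (∑ j : Fin d, g ((j:ℕ):ℤ)) * (starRingEnd ℂ) (g ((k:ℕ):ℤ)) =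
      ∑ t : Fin d, g (((k:ℕ):ℤ) + (t:ℕ)) * (starRingEnd ℂ) (g ((k:ℕ):ℤ)) := by
    intro k
    rw [← shiftSum d hd g hper ((k:ℕ):ℤ), Finset.sum_mul]
  simp_rw [step1]
  rw [Finset.sum_comm]
  have step2 : ∀ t k : Fin d, g (((k:ℕ):ℤ) + (t:ℕ)) * (starRingEnd ℂ) (g ((k:ℕ):ℤ)) =
      g ((t:ℕ):ℤ) * Complex.exp (2 * Real.pi * Complex.I * ((A * (t:ℕ) : ℤ):ℂ) * ((k:ℕ):ℂ) / d) := by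
    intro t k
    rw [hconj, hg]
    show Complex.exp _ * Complex.exp _ = Complex.exp _ * Complex.exp _
    rw [← Complex.exp_add, ← Complex.exp_add]
    congr 1
    push_cast
    ring
  simp_rw [step2, ← Finset.mul_sum]
  have step3 : ∀ t : Fin d, ∑ k : Fin d,
      Complex.exp (2 * Real.pi * Complex.I * ((A * (t:ℕ) : ℤ):ℂ) * ((k:ℕ):ℂ) / d)
      = if (d:ℤ) ∣ A * (t:ℕ) then (d:ℂ) else 0 := fun t => sumA d hd (A * (t:ℕ))
  simp_rw [step3]
  rw [Finset.sum_eq_single (0 : Fin d)]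
  · have h0 : ((d:ℤ) ∣ A * (((0:Fin d):ℕ):ℤ)) := by simp
    rw [if_pos h0, hg]
    show Complex.exp _ * _ = _
    norm_num
  · intro t _ ht
    have : ¬ (d:ℤ) ∣ A * ((t:ℕ):ℤ) := by
      intro hdvd
      have h1 : (d:ℤ) ∣ ((t:ℕ):ℤ) := (IsCoprime.symm hcop).dvd_of_dvd_mul_left hdvd
      have h2 : d ∣ (t:ℕ) := Int.ofNat_dvd.mp h1
      have h3 : (t:ℕ) = 0 := Nat.eq_zero_of_dvd_of_lt h2 t.isLt
      exact ht (Fin.ext h3)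
    rw [if_neg this, mul_zero]
  · intro h
    exact absurd (Finset.mem_univ _) h

lemma mubConjExp (x : ℝ) :
    (starRingEnd ℂ) (Complex.exp (2*Real.pi*Complex.I*(x:ℂ))) =
      Complex.exp (-(2*Real.pi*Complex.I*(x:ℂ))) := by
  rw [← Complex.exp_conj]
  congr 1
  simp [_root_.map_mul, Complex.conj_I, Complex.conj_ofReal, map_ofNat]

lemma mubAbsExp (x : ℝ) :
    ‖Complex.exp (2*Real.pi*Complex.I*(x:ℂ))‖ = 1 := by
  rw [Complex.norm_exp]
  have h : (2*(Real.pi:ℂ)*Complex.I*(x:ℂ)).re = 0 := by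
    simp [Complex.mul_re, Complex.mul_im]
  rw [h, Real.exp_zero]

lemma dvd_iff_eq (d : ℕ) (a b : Fin d) : ((d:ℤ) ∣ ((b:ℕ):ℤ) - ((a:ℕ):ℤ)) ↔ a = b := by
  constructor
  · intro h
    have := Int.eq_zero_of_abs_lt_dvd h (by
      have ha := a.isLt; have hb := b.isLt
      rw [abs_lt]; omega)
    have : (a:ℕ) = (b:ℕ) := by omega
    exact Fin.ext this
  · rintro rfl; simp

/-- The three bases of Lemma 2: `e¹_a` is the standard basis,
`e²_a = (1/√d) Σ_j exp(2πi(aj/d + f(j))) e_j`, and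
`e³_a = (1/√d) Σ_j exp(2πi((d − p^r)j²/(2d) + aj/d + f(j))) e_j`. -/
noncomputable def mubE (d : ℕ) (f : Fin d → ℝ) (r p : ℕ) :
    Fin 3 → Fin d → Fin d → ℂ :=
  ![fun a j => if j = a then (1 : ℂ) else 0,
    fun a j => ((Real.sqrt d : ℂ))⁻¹ *
      Complex.exp (2 * Real.pi * Complex.I *
        (((a : ℕ) : ℂ) * ((j : ℕ) : ℂ) / d + ((f j : ℝ) : ℂ))),
    fun a j => ((Real.sqrt d : ℂ))⁻¹ *
      Complex.exp (2 * Real.pi * Complex.I *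
        (((d : ℂ) - (p : ℂ) ^ r) * ((j : ℕ) : ℂ) ^ 2 / (2 * d) +
          ((a : ℕ) : ℂ) * ((j : ℕ) : ℂ) / d + ((f j : ℝ) : ℂ)))]

/-- Lemma 2 (three mutually unbiased bases in every dimension): for any `d ≥ 2`, any
`f : {0,…,d−1} → ℝ`, any `r ∈ ℕ ∪ {0}` and any odd prime `p` with `gcd(d,p) = 1` and
`d > p^r`, the three bases `{e¹_a}, {e²_a}, {e³_a}` are orthonormal bases of `ℂ^d` and are
pairwise mutually unbiased: `|⟨e^z_a, e^{z'}_b⟩|² = 1/d` for all `z ≠ z'` and all `a, b`. -/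
theorem stmt13 (d : ℕ) (hd : 2 ≤ d) (f : Fin d → ℝ) (r p : ℕ)
    (hp : p.Prime) (hodd : Odd p) (hgcd : Nat.gcd d p = 1) (hdp : p ^ r < d) :
    (∀ z : Fin 3, ∀ a b : Fin d,
      star (mubE d f r p z a) ⬝ᵥ mubE d f r p z b = (if a = b then (1 : ℂ) else 0)) ∧
    (∀ z z' : Fin 3, z ≠ z' → ∀ a b : Fin d,
      ‖star (mubE d f r p z a) ⬝ᵥ mubE d f r p z' b‖ ^ 2 = 1 / d) := by
  have hd0 : 0 < d := by omega
  have hdR : (0:ℝ) < d := by exact_mod_cast hd0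
  have hdC : (d : ℂ) ≠ 0 := Nat.cast_ne_zero.mpr hd0.ne'
  have hsq : Real.sqrt d ≠ 0 := Real.sqrt_ne_zero'.mpr hdR
  set E := mubE d f r p with hE
  -- explicit components
  have hE0 : ∀ a j : Fin d, E 0 a j = if j = a then (1:ℂ) else 0 := fun a j => rfl
  have hE1 : ∀ a j : Fin d, E 1 a j = ((Real.sqrt d : ℂ))⁻¹ *
      Complex.exp (2 * Real.pi * Complex.I *
        ((((a:ℕ) * (j:ℕ) / (d:ℝ) + f j : ℝ)):ℂ)) := by
    intro a j
    show ((Real.sqrt d : ℂ))⁻¹ * _ = _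
    congr 2
    push_cast
    ring
  have hE2 : ∀ a j : Fin d, E 2 a j = ((Real.sqrt d : ℂ))⁻¹ *
      Complex.exp (2 * Real.pi * Complex.I *
        (((((d:ℝ) - (p:ℝ)^r) * (j:ℕ)^2 / (2*d) + (a:ℕ) * (j:ℕ) / (d:ℝ) + f j : ℝ)):ℂ)) := by
    intro a j
    show ((Real.sqrt d : ℂ))⁻¹ * _ = _
    congr 2
    push_cast
    ring
  have hdot : ∀ u v : Fin d → ℂ, star u ⬝ᵥ v = ∑ j : Fin d, (starRingEnd ℂ) (u j) * v j := by
    intro u v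
    simp [dotProduct, Pi.star_apply, Complex.star_def]
  have hsym : ∀ u v : Fin d → ℂ, star u ⬝ᵥ v = (starRingEnd ℂ) (star v ⬝ᵥ u) := by
    intro u v
    rw [hdot, hdot, map_sum]
    apply Finset.sum_congr rfl
    intro j _
    simp [mul_comm]
  have hss : ((Real.sqrt d : ℂ))⁻¹ * ((Real.sqrt d : ℂ))⁻¹ = (d:ℂ)⁻¹ := by
    rw [← mul_inv, ← Complex.ofReal_mul, Real.mul_self_sqrt (le_of_lt hdR),
      Complex.ofReal_natCast]
  have habs_s : ‖((Real.sqrt d : ℂ))⁻¹‖ = (Real.sqrt d)⁻¹ := by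
    rw [norm_inv, Complex.norm_real, Real.norm_eq_abs, _root_.abs_of_nonneg (Real.sqrt_nonneg _)]
  have hsq2 : ((Real.sqrt d)⁻¹)^2 = 1/d := by
    rw [inv_pow, Real.sq_sqrt (le_of_lt hdR), inv_eq_one_div]
  -- orthonormality z = 0
  have h00 : ∀ a b : Fin d, star (E 0 a) ⬝ᵥ E 0 b = if a = b then (1:ℂ) else 0 := by
    intro a b
    rw [hdot]
    simp_rw [hE0]
    simp [apply_ite (starRingEnd ℂ), Finset.sum_ite_eq, ite_mul]
    exact if_congr eq_comm rfl rfl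
  -- orthonormality z = 1
  have h11 : ∀ a b : Fin d, star (E 1 a) ⬝ᵥ E 1 b = if a = b then (1:ℂ) else 0 := by
    intro a b
    rw [hdot]
    have hterm : ∀ j : Fin d, (starRingEnd ℂ) (E 1 a j) * E 1 b j =
        (d:ℂ)⁻¹ * Complex.exp (2 * Real.pi * Complex.I *
          ((((b:ℕ):ℤ) - ((a:ℕ):ℤ) : ℤ):ℂ) * ((j:ℕ):ℂ) / d) := by
      intro j
      rw [hE1 a j, hE1 b j, _root_.map_mul, mubConjExp, map_inv₀, Complex.conj_ofReal,
        mul_mul_mul_comm, hss, ← Complex.exp_add]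
      congr 1
      push_cast
      ring
    simp_rw [hterm]
    rw [← Finset.mul_sum, sumA d hd0 _]
    by_cases h : a = b
    · rw [if_pos ((dvd_iff_eq d a b).mpr h), if_pos h, inv_mul_cancel₀ hdC]
    · rw [if_neg (fun hdvd => h ((dvd_iff_eq d a b).mp hdvd)), if_neg h, mul_zero]
  -- orthonormality z = 2
  have h22 : ∀ a b : Fin d, star (E 2 a) ⬝ᵥ E 2 b = if a = b then (1:ℂ) else 0 := by
    intro a b
    rw [hdot]
    have hterm : ∀ j : Fin d, (starRingEnd ℂ) (E 2 a j) * E 2 b j =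
        (d:ℂ)⁻¹ * Complex.exp (2 * Real.pi * Complex.I *
          ((((b:ℕ):ℤ) - ((a:ℕ):ℤ) : ℤ):ℂ) * ((j:ℕ):ℂ) / d) := by
      intro j
      rw [hE2 a j, hE2 b j, _root_.map_mul, mubConjExp, map_inv₀, Complex.conj_ofReal,
        mul_mul_mul_comm, hss, ← Complex.exp_add]
      congr 1
      push_cast
      ring
    simp_rw [hterm]
    rw [← Finset.mul_sum, sumA d hd0 _]
    by_cases h : a = b
    · rw [if_pos ((dvd_iff_eq d a b).mpr h), if_pos h, inv_mul_cancel₀ hdC]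
    · rw [if_neg (fun hdvd => h ((dvd_iff_eq d a b).mp hdvd)), if_neg h, mul_zero]
  -- unbiased (0,1)
  have h01 : ∀ a b : Fin d, ‖star (E 0 a) ⬝ᵥ E 1 b‖ ^ 2 = 1/d := by
    intro a b
    rw [hdot]
    have : ∑ j : Fin d, (starRingEnd ℂ) (E 0 a j) * E 1 b j = E 1 b a := by
      simp_rw [hE0]
      simp [apply_ite (starRingEnd ℂ), ite_mul, Finset.sum_ite_eq]
    rw [this, hE1, norm_mul, habs_s, mubAbsExp, mul_one, hsq2]
  -- unbiased (0,2)
  have h02 : ∀ a b : Fin d, ‖star (E 0 a) ⬝ᵥ E 2 b‖ ^ 2 = 1/d := by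
    intro a b
    rw [hdot]
    have : ∑ j : Fin d, (starRingEnd ℂ) (E 0 a j) * E 2 b j = E 2 b a := by
      simp_rw [hE0]
      simp [apply_ite (starRingEnd ℂ), ite_mul, Finset.sum_ite_eq]
    rw [this, hE2, norm_mul, habs_s, mubAbsExp, mul_one, hsq2]
  -- unbiased (1,2) : Gauss sum
  have h12 : ∀ a b : Fin d, ‖star (E 1 a) ⬝ᵥ E 2 b‖ ^ 2 = 1/d := by
    intro a b
    set A : ℤ := (d:ℤ) - (p:ℤ)^r with hA
    set B : ℤ := ((b:ℕ):ℤ) - ((a:ℕ):ℤ) with hB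
    have hcop : IsCoprime A ((d:ℤ)) := by
      have h1 : Nat.Coprime d (p^r) := (Nat.coprime_iff_gcd_eq_one.mpr hgcd).pow_right r
      have h2 : IsCoprime ((d:ℤ)) ((p:ℤ)^r) := by
        rw [← Nat.cast_pow]
        exact Int.isCoprime_iff_gcd_eq_one.mpr h1
      have h3 : IsCoprime ((p:ℤ)^r) ((d:ℤ)) := h2.symm
      have h4 : IsCoprime ((p:ℤ)^r + (d:ℤ) * (-1)) ((d:ℤ)) := h3.add_mul_left_left (-1)
      have h5 : IsCoprime (-((p:ℤ)^r + (d:ℤ) * (-1))) ((d:ℤ)) := h4.neg_left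
      have : A = -((p:ℤ)^r + (d:ℤ) * (-1)) := by rw [hA]; ring
      rwa [this]
    have heven : (2:ℤ) ∣ A * d := by
      rcases Nat.even_or_odd d with he | ho
      · exact Dvd.dvd.mul_left (by exact_mod_cast he.two_dvd) A
      · have hoddp : Odd ((p:ℤ)^r) := by
          have : Odd (p^r) := hodd.pow
          exact_mod_cast this
        have hoddd : Odd ((d:ℤ)) := by exact_mod_cast ho
        have : Even A := by
          rw [hA]
          exact hoddd.sub_odd hoddp
        exact Dvd.dvd.mul_right this.two_dvd d
    obtain ⟨c, hc⟩ := heven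
    set S : ℂ := ∑ j : Fin d,
      Complex.exp (Real.pi * Complex.I * ((A:ℂ) * ((j:ℕ):ℂ)^2 + 2*(B:ℂ)*((j:ℕ):ℂ)) / d) with hSdef
    have hgauss := gaussB d hd0 A B c hcop hc
    have habsS : ‖S‖ ^ 2 = (d:ℝ) := by
      have h1 : ((‖S‖ ^ 2 : ℝ) : ℂ) = (d:ℂ) :=
        calc ((‖S‖ ^ 2 : ℝ) : ℂ) = (Complex.normSq S : ℂ) := by
              rw [Complex.sq_norm]
          _ = S * (starRingEnd ℂ) S := (Complex.mul_conj S).symm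
          _ = (d:ℂ) := hgauss
      exact_mod_cast h1
    -- inner product equals d⁻¹ * S
    have hval : star (E 1 a) ⬝ᵥ E 2 b = (d:ℂ)⁻¹ * S := by
      rw [hdot, hSdef, Finset.mul_sum]
      apply Finset.sum_congr rfl
      intro j _
      rw [hE1 a j, hE2 b j, _root_.map_mul, mubConjExp, map_inv₀, Complex.conj_ofReal,
        mul_mul_mul_comm, hss, ← Complex.exp_add]
      congr 1
      congr 1
      push_cast [hA, hB]
      field_simp
      ring
    rw [hval, norm_mul, mul_pow, habsS, norm_inv, Complex.norm_natCast]
    field_simp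
  -- assemble
  constructor
  · intro z a b
    fin_cases z
    · exact h00 a b
    · exact h11 a b
    · exact h22 a b
  · intro z z' hzz a b
    fin_cases z <;> fin_cases z'
    · exact absurd rfl hzz
    · exact h01 a b
    · exact h02 a b
    · rw [hsym, Complex.norm_conj]; exact h01 b a
    · exact absurd rfl hzz
    · exact h12 a b
    · rw [hsym, Complex.norm_conj]; exact h02 b a
    · rw [hsym, Complex.norm_conj]; exact h12 b a
    · exact absurd rfl hzz
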